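/- Let k be a commutative ring and A a commutative k-algebra. For every m (a positive integer or m = ∞), the set Ider_k(A;m) of m-integrable k-derivations of A is an A-submodule of Der_k(A): it contains 0, and it is closed under addition and under multiplication by elements of A. -/

import Mathlib

namespace HS

open Finset

private theorem keylem {M : Type*} [AddCommMonoid M] (i : ℕ) (f : ℕ → ℕ → ℕ → ℕ → M) :
    ∑ jw ∈ antidiagonal i, ∑ lr ∈ antidiagonal jw.2, ∑ pq ∈ antidiagonal jw.1,
      f pq.1 lr.1 pq.2 lr.2
    = ∑ st ∈ antidiagonal i, ∑ pl ∈ antidiagonal st.1, ∑ qr ∈ antidiagonal st.2,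
      f pl.1 pl.2 qr.1 qr.2 := by
  simp only [← Finset.sum_product']
  rw [Finset.sum_sigma', Finset.sum_sigma']
  refine Finset.sum_nbij'
    (fun x => ⟨(x.2.2.1 + x.2.1.1, x.2.2.2 + x.2.1.2), ((x.2.2.1, x.2.1.1), (x.2.2.2, x.2.1.2))⟩)
    (fun x => ⟨(x.2.1.1 + x.2.2.1, x.2.1.2 + x.2.2.2), ((x.2.1.2, x.2.2.2), (x.2.1.1, x.2.2.1))⟩)
    ?_ ?_ ?_ ?_ ?_
  all_goals
    rintro ⟨⟨a, b⟩, ⟨⟨c, d⟩, ⟨e, g⟩⟩⟩ h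
    simp only [Finset.mem_sigma, Finset.mem_product, Finset.HasAntidiagonal.mem_antidiagonal] at h
    obtain ⟨h1, h2, h3⟩ := h
    subst h2 h3
    first
      | rfl
      | (dsimp only
         simp only [Finset.mem_sigma, Finset.mem_product, Finset.HasAntidiagonal.mem_antidiagonal]
         exact ⟨by omega, trivial, trivial⟩)

/-- A Hasse–Schmidt derivation of `A` over `k` of length `m` (`m : ℕ∞`, with
`m = ⊤` for length `∞`): a family `D = (D_i)` of `k`-linear endomorphisms with
`D_0 = id` and `D_i(xy) = ∑_{j+l=i} D_j(x) D_l(y)` for all `i ≤ m`. -/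
def IsHS1 (k A : Type*) [CommRing k] [CommRing A] [Algebra k A]
    (m : ℕ∞) (D : ℕ → Module.End k A) : Prop :=
  D 0 = 1 ∧ ∀ i : ℕ, (i : ℕ∞) ≤ m → ∀ x y : A,
    D i (x * y) = ∑ j ∈ Finset.range (i + 1), D j x * D (i - j) y

/-- `δ` is an `m`-integrable `k`-derivation of `A`. -/
def IsIntegrable (k A : Type*) [CommRing k] [CommRing A] [Algebra k A]
    (m : ℕ∞) (δ : Derivation k A A) : Prop :=
  ∃ D : ℕ → Module.End k A, IsHS1 k A m D ∧ D 1 = δ.toLinearMap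

/-- For every `m` (a positive integer or `m = ∞ = ⊤`), the set
`Ider_k(A;m)` of `m`-integrable `k`-derivations of `A` is an `A`-submodule of
`Der_k(A)`: it contains `0`, and is closed under addition and under multiplication
by elements of `A`. -/
theorem stmt11 (k A : Type*) [CommRing k] [CommRing A] [Algebra k A]
    (m : ℕ∞) (hm : 1 ≤ m) :
    IsIntegrable k A m (0 : Derivation k A A)
    ∧ (∀ δ₁ δ₂ : Derivation k A A,
        IsIntegrable k A m δ₁ → IsIntegrable k A m δ₂ → IsIntegrable k A m (δ₁ + δ₂))
    ∧ (∀ (a : A) (δ : Derivation k A A),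
        IsIntegrable k A m δ → IsIntegrable k A m (a • δ)) := by
  refine ⟨?_, ?_, ?_⟩
  · -- zero is integrable
    refine ⟨fun i => if i = 0 then 1 else 0, ⟨by simp, ?_⟩, by simp⟩
    intro i hi x y
    dsimp only
    rcases Nat.eq_zero_or_pos i with h | h
    · subst h; simp
    · rw [if_neg (by omega)]
      simp only [LinearMap.zero_apply]
      symm
      apply Finset.sum_eq_zero
      intro j hj
      rcases Nat.eq_zero_or_pos j with h0 | h0
      · subst h0
        rw [if_pos rfl, if_neg (by omega)]
        simp
      · rw [if_neg (by omega)]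
        simp
  · -- sum of integrable is integrable
    rintro δ₁ δ₂ ⟨D, ⟨hD0, hD⟩, hD1⟩ ⟨E, ⟨hE0, hE⟩, hE1⟩
    refine ⟨fun i => ∑ jw ∈ antidiagonal i, D jw.1 ∘ₗ E jw.2, ⟨?_, ?_⟩, ?_⟩
    · dsimp only
      rw [Finset.Nat.antidiagonal_zero, Finset.sum_singleton]
      rw [hD0, hE0]
      rfl
    · intro i hi x y
      dsimp only
      have lhs :
          (∑ jw ∈ antidiagonal i, D jw.1 ∘ₗ E jw.2) (x * y)
            = ∑ jw ∈ antidiagonal i, ∑ lr ∈ antidiagonal jw.2, ∑ pq ∈ antidiagonal jw.1,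
                D pq.1 (E lr.1 x) * D pq.2 (E lr.2 y) := by
        rw [LinearMap.sum_apply]
        refine Finset.sum_congr rfl ?_
        rintro ⟨j, w⟩ hjw
        have hjw' := Finset.HasAntidiagonal.mem_antidiagonal.mp hjw
        have hw : (w : ℕ∞) ≤ m :=
          le_trans (Nat.cast_le.mpr (by omega)) hi
        have hj : (j : ℕ∞) ≤ m :=
          le_trans (Nat.cast_le.mpr (by omega)) hi
        rw [LinearMap.comp_apply, hE w hw x y,
          ← Finset.Nat.sum_antidiagonal_eq_sum_range_succ_mk
            (fun lr => E lr.1 x * E lr.2 y) w, map_sum]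
        refine Finset.sum_congr rfl ?_
        rintro ⟨l, r⟩ _
        rw [hD j hj, ← Finset.Nat.sum_antidiagonal_eq_sum_range_succ_mk
          (fun pq => D pq.1 (E l x) * D pq.2 (E r y)) j]
      have rhs :
          ∑ s ∈ Finset.range (i + 1),
              (∑ jw ∈ antidiagonal s, D jw.1 ∘ₗ E jw.2) x
                * (∑ jw ∈ antidiagonal (i - s), D jw.1 ∘ₗ E jw.2) y
            = ∑ st ∈ antidiagonal i, ∑ pl ∈ antidiagonal st.1, ∑ qr ∈ antidiagonal st.2,
                D pl.1 (E pl.2 x) * D qr.1 (E qr.2 y) := by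
        rw [← Finset.Nat.sum_antidiagonal_eq_sum_range_succ_mk
          (fun st => (∑ jw ∈ antidiagonal st.1, D jw.1 ∘ₗ E jw.2) x
            * (∑ jw ∈ antidiagonal st.2, D jw.1 ∘ₗ E jw.2) y) i]
        refine Finset.sum_congr rfl ?_
        rintro ⟨s, t⟩ _
        rw [LinearMap.sum_apply, LinearMap.sum_apply, Finset.sum_mul_sum]
        simp only [LinearMap.comp_apply]
      rw [lhs, rhs]
      exact keylem i (fun p l q r => D p (E l x) * D q (E r y))
    · ext x
      show (∑ jw ∈ antidiagonal 1, D jw.1 ∘ₗ E jw.2) x = _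
      rw [LinearMap.sum_apply,
        Finset.Nat.sum_antidiagonal_eq_sum_range_succ_mk
          (fun jw => (D jw.1 ∘ₗ E jw.2) x) 1,
        Finset.sum_range_succ, Finset.sum_range_one]
      simp [hD0, hE0, hD1, hE1, add_comm]
  · -- scalar multiple of integrable is integrable
    rintro a δ ⟨D, ⟨hD0, hD⟩, hD1⟩
    refine ⟨fun i => a ^ i • D i, ⟨by simp [hD0], ?_⟩, ?_⟩
    · intro i hi x y
      dsimp only
      simp only [LinearMap.smul_apply, smul_eq_mul]
      rw [hD i hi x y, Finset.mul_sum]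
      refine Finset.sum_congr rfl fun j hj => ?_
      have hji : j ≤ i := Nat.lt_succ_iff.mp (Finset.mem_range.mp hj)
      have hpow : a ^ j * a ^ (i - j) = a ^ i := by
        rw [← pow_add]; congr 1; omega
      rw [← hpow]; ring
    · ext x
      simp [hD1]

end HS
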